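/- arXiv:1705.10619 — 2 statements merged into one kernel-verified Lean document; each statement's English description precedes it below -/
import Mathlib

section
/- Let d ≥ 1, let ω, v be weights on ℝ^d with v submultiplicative and ω v-moderate, let p ∈ (0,∞] and r ∈ (0, min(1,p)]. Then there exists C > 0 such that for every a: ℤ^d → ℂ with ∑_{j∈ℤ^d} (|a(j)|·v(j))^r < ∞ and every measurable f: ℝ^d → ℂ with ‖f·ω‖_{L^p(ℝ^d)} < ∞, the semi-discrete convolution (a ∗ f)(x) = ∑_{j∈ℤ^d} a(j)·f(x−j) converges absolutely for almost every x ∈ ℝ^d and ‖(a ∗ f)·ω‖_{L^p(ℝ^d)} ≤ C·(∑_{j∈ℤ^d} (|a(j)|·v(j))^r)^{1/r}·‖f·ω‖_{L^p(ℝ^d)}. -/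
open MeasureTheory Complex Real
open scoped InnerProductSpace ENNReal
open scoped NNReal

noncomputable section

/-- `ℝ^d` as a Euclidean space. -/
abbrev Ed (d : ℕ) := EuclideanSpace ℝ (Fin d)

/-- The point of the lattice `ℤ^d ⊆ ℝ^d` corresponding to `j : ℤ^d`. -/
def intVec (d : ℕ) (j : Fin d → ℤ) : Ed d := WithLp.toLp 2 (fun i => (j i : ℝ))

/-- A weight on `ℝ^d`: a measurable positive function which is locally bounded together
with its reciprocal. -/
def IsWeight (d : ℕ) (w : Ed d → ℝ) : Prop :=
  Measurable w ∧ (∀ x, 0 < w x) ∧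
    ∀ R : ℝ, ∃ M : ℝ, ∀ x : Ed d, ‖x‖ ≤ R → w x ≤ M ∧ (w x)⁻¹ ≤ M

/-- A weight `v` is submultiplicative: `v` is even and `v(x+y) ≲ v(x)·v(y)`. -/
def Submult (d : ℕ) (v : Ed d → ℝ) : Prop :=
  (∀ x, v (-x) = v x) ∧ ∃ C : ℝ, 0 < C ∧ ∀ x y, v (x + y) ≤ C * v x * v y

/-- `ω` is `v`-moderate: `ω(x+y) ≲ ω(x)·v(y)`. -/
def Moderate (d : ℕ) (ω v : Ed d → ℝ) : Prop :=
  ∃ C : ℝ, 0 < C ∧ ∀ x y, ω (x + y) ≤ C * ω x * v y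

section AuxLemmas

variable {α : Type*} [MeasurableSpace α] {μ : Measure α} {ι : Type*} [Countable ι]

lemma rpow_iSup' {κ : Sort*} (g : κ → ℝ≥0∞) {s : ℝ} (hs : 0 < s) :
    (⨆ i, g i) ^ s = ⨆ i, g i ^ s := by
  refine (ENNReal.monotone_rpow_of_nonneg hs.le).map_iSup_of_continuousAt
    (ENNReal.continuous_rpow_const.continuousAt) ?_
  simp [ENNReal.zero_rpow_of_pos hs]

lemma sum_rpow_le' (I : Finset ι) (u : ι → ℝ≥0∞) {s : ℝ} (hs0 : 0 < s) (hs1 : s ≤ 1) :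
    (∑ i ∈ I, u i) ^ s ≤ ∑ i ∈ I, u i ^ s := by
  classical
  induction I using Finset.cons_induction with
  | empty => simp [ENNReal.zero_rpow_of_pos hs0]
  | cons a I ha ih =>
    rw [Finset.sum_cons, Finset.sum_cons]
    exact le_trans (ENNReal.rpow_add_le_add_rpow _ _ hs0.le hs1) (by gcongr)

lemma tsum_rpow_le' (u : ι → ℝ≥0∞) {s : ℝ} (hs0 : 0 < s) (hs1 : s ≤ 1) :
    (∑' i, u i) ^ s ≤ ∑' i, u i ^ s := by
  rw [ENNReal.tsum_eq_iSup_sum, rpow_iSup' _ hs0]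
  exact iSup_le fun I => le_trans (sum_rpow_le' I u hs0 hs1)
    (ENNReal.sum_le_tsum I)

lemma tsum_rpow_ge' (u : ι → ℝ≥0∞) {s : ℝ} (hs : 1 ≤ s) :
    ∑' i, u i ^ s ≤ (∑' i, u i) ^ s := by
  have hs0 : 0 < s := lt_of_lt_of_le one_pos hs
  set T := ∑' i, u i with hT
  rcases eq_or_ne T ⊤ with h | hTne
  · rw [h, ENNReal.top_rpow_of_pos hs0]; exact le_top
  rcases eq_or_ne T 0 with h0 | hT0
  · have : ∀ i, u i = 0 := by
      intro i
      have := ENNReal.le_tsum (f := u) i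
      rw [← hT, h0] at this; simpa using this
    simp [this, ENNReal.zero_rpow_of_pos hs0]
  have hstep : ∀ i, u i ^ s ≤ T ^ (s - 1) * u i := by
    intro i
    rcases eq_or_ne (u i) 0 with h | h
    · simp [h, ENNReal.zero_rpow_of_pos hs0]
    · have hle : u i ≤ T := ENNReal.le_tsum i
      have hune : u i ≠ ⊤ := ne_top_of_le_ne_top hTne hle
      calc u i ^ s = u i ^ (s - 1) * u i := by
            conv_lhs => rw [show s = (s-1)+1 by ring]
            rw [ENNReal.rpow_add _ _ h hune, ENNReal.rpow_one]
        _ ≤ T ^ (s - 1) * u i := by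
            gcongr
  calc ∑' i, u i ^ s ≤ ∑' i, T ^ (s - 1) * u i := ENNReal.tsum_le_tsum hstep
    _ = T ^ (s - 1) * T := by rw [ENNReal.tsum_mul_left]
    _ = T ^ s := by
        conv_rhs => rw [show s = (s-1)+1 by ring]
        rw [ENNReal.rpow_add _ _ hT0 hTne, ENNReal.rpow_one]

lemma lintegral_Lp_sum_le' {h : ι → α → ℝ≥0∞} (hm : ∀ i, Measurable (h i)) {q : ℝ}
    (hq : 1 ≤ q) (I : Finset ι) :
    (∫⁻ x, (∑ i ∈ I, h i x) ^ q ∂μ) ^ (1/q) ≤ ∑ i ∈ I, (∫⁻ x, h i x ^ q ∂μ) ^ (1/q) := by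
  classical
  have hq0 : 0 < q := lt_of_lt_of_le one_pos hq
  induction I using Finset.cons_induction with
  | empty => simp [ENNReal.zero_rpow_of_pos hq0, ENNReal.zero_rpow_of_pos (by positivity : (0:ℝ) < 1/q), hq0]
  | cons a I ha ih =>
    simp only [Finset.sum_cons]
    calc (∫⁻ x, (h a x + ∑ i ∈ I, h i x) ^ q ∂μ) ^ (1/q)
        ≤ (∫⁻ x, h a x ^ q ∂μ) ^ (1/q) + (∫⁻ x, (∑ i ∈ I, h i x) ^ q ∂μ) ^ (1/q) :=
          ENNReal.lintegral_Lp_add_le (hm a).aemeasurable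
            (Finset.measurable_sum I fun i _ => hm i).aemeasurable hq
      _ ≤ _ := by gcongr

lemma lintegral_Lp_tsum_le' {h : ι → α → ℝ≥0∞} (hm : ∀ i, Measurable (h i)) {q : ℝ}
    (hq : 1 ≤ q) :
    (∫⁻ x, (∑' i, h i x) ^ q ∂μ) ^ (1/q) ≤ ∑' i, (∫⁻ x, h i x ^ q ∂μ) ^ (1/q) := by
  classical
  have hq0 : 0 < q := lt_of_lt_of_le one_pos hq
  set N : ι → ℝ≥0∞ := fun i => (∫⁻ x, h i x ^ q ∂μ) ^ (1/q) with hN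
  have key : ∫⁻ x, (∑' i, h i x) ^ q ∂μ ≤ (∑' i, N i) ^ q := by
    have hpt : ∀ x, (∑' i, h i x) ^ q = ⨆ I : Finset ι, (∑ i ∈ I, h i x) ^ q := by
      intro x; rw [ENNReal.tsum_eq_iSup_sum, rpow_iSup' _ hq0]
    calc ∫⁻ x, (∑' i, h i x) ^ q ∂μ
        = ∫⁻ x, ⨆ I : Finset ι, (∑ i ∈ I, h i x) ^ q ∂μ := by simp_rw [hpt]
      _ = ⨆ I : Finset ι, ∫⁻ x, (∑ i ∈ I, h i x) ^ q ∂μ := by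
          refine lintegral_iSup_directed
            (fun I => ((Finset.measurable_sum I fun i _ => hm i).pow_const q).aemeasurable) ?_
          intro I J
          refine ⟨I ∪ J, fun x => ENNReal.rpow_le_rpow ?_ hq0.le,
            fun x => ENNReal.rpow_le_rpow ?_ hq0.le⟩
          · exact Finset.sum_le_sum_of_subset Finset.subset_union_left
          · exact Finset.sum_le_sum_of_subset Finset.subset_union_right
      _ ≤ (∑' i, N i) ^ q := by
          refine iSup_le fun I => ?_
          have h1 := lintegral_Lp_sum_le' (μ := μ) hm hq I
          have h2 := ENNReal.rpow_le_rpow h1 hq0.le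
          rw [← ENNReal.rpow_mul, one_div_mul_cancel hq0.ne', ENNReal.rpow_one] at h2
          exact h2.trans (ENNReal.rpow_le_rpow (ENNReal.sum_le_tsum I) hq0.le)
  calc (∫⁻ x, (∑' i, h i x) ^ q ∂μ) ^ (1/q) ≤ ((∑' i, N i) ^ q) ^ (1/q) := by gcongr
    _ = ∑' i, N i := by
        rw [← ENNReal.rpow_mul, mul_one_div_cancel hq0.ne', ENNReal.rpow_one]

lemma lp_key_finite {h : ι → α → ℝ≥0∞} (hm : ∀ i, Measurable (h i)) {q r : ℝ}
    (hq : 0 < q) (hr0 : 0 < r) (hr1 : r ≤ 1) (hrq : r ≤ q) :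
    (∫⁻ x, (∑' i, h i x) ^ q ∂μ) ^ (1/q) ≤
      (∑' i, ((∫⁻ x, h i x ^ q ∂μ) ^ (1/q)) ^ r) ^ (1/r) := by
  set N : ι → ℝ≥0∞ := fun i => (∫⁻ x, h i x ^ q ∂μ) ^ (1/q) with hN
  have hNq : ∀ i, N i ^ q = ∫⁻ x, h i x ^ q ∂μ := by
    intro i
    rw [hN, ← ENNReal.rpow_mul, one_div, inv_mul_cancel₀ hq.ne', ENNReal.rpow_one]
  rcases le_total q 1 with hq1 | hq1
  · -- q ≤ 1
    have step1 : ∫⁻ x, (∑' i, h i x) ^ q ∂μ ≤ ∑' i, N i ^ q := by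
      calc ∫⁻ x, (∑' i, h i x) ^ q ∂μ ≤ ∫⁻ x, ∑' i, h i x ^ q ∂μ :=
            lintegral_mono fun x => tsum_rpow_le' _ hq hq1
        _ = ∑' i, ∫⁻ x, h i x ^ q ∂μ :=
            lintegral_tsum fun i => ((hm i).pow_const q).aemeasurable
        _ = ∑' i, N i ^ q := tsum_congr fun i => (hNq i).symm
    have step2 : ∑' i, N i ^ q ≤ (∑' i, N i ^ r) ^ (q/r) := by
      have hqr : q = r * (q/r) := by
        rw [mul_comm r (q/r), div_mul_cancel₀ q hr0.ne']
      have : ∀ i, N i ^ q = (N i ^ r) ^ (q/r) := by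
        intro i
        conv_lhs => rw [hqr]
        exact ENNReal.rpow_mul _ r (q/r)
      simp_rw [this]
      exact tsum_rpow_ge' _ ((one_le_div hr0).2 hrq)
    calc (∫⁻ x, (∑' i, h i x) ^ q ∂μ) ^ (1/q)
        ≤ ((∑' i, N i ^ r) ^ (q/r)) ^ (1/q) := by
          gcongr
          exact step1.trans step2
      _ = (∑' i, N i ^ r) ^ (1/r) := by
          rw [← ENNReal.rpow_mul]
          congr 1
          field_simp
  · -- 1 ≤ q
    calc (∫⁻ x, (∑' i, h i x) ^ q ∂μ) ^ (1/q) ≤ ∑' i, N i := lintegral_Lp_tsum_le' hm hq1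
      _ = ((∑' i, N i) ^ r) ^ (1/r) := by
          rw [← ENNReal.rpow_mul, mul_one_div_cancel hr0.ne', ENNReal.rpow_one]
      _ ≤ (∑' i, N i ^ r) ^ (1/r) := by
          gcongr
          exact tsum_rpow_le' _ hr0 hr1

lemma lp_key_top {h : ι → α → ℝ≥0∞} {r : ℝ} (hr0 : 0 < r) (hr1 : r ≤ 1) :
    essSup (fun x => ∑' i, h i x) μ ≤ (∑' i, essSup (h i) μ ^ r) ^ (1/r) := by
  have step1 : essSup (fun x => ∑' i, h i x) μ ≤ ∑' i, essSup (h i) μ := by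
    refine essSup_le_of_ae_le _ ?_
    have : ∀ᵐ x ∂μ, ∀ i, h i x ≤ essSup (h i) μ :=
      (ae_all_iff).2 fun i => ENNReal.ae_le_essSup (h i)
    filter_upwards [this] with x hx
    exact ENNReal.tsum_le_tsum hx
  calc essSup (fun x => ∑' i, h i x) μ ≤ ∑' i, essSup (h i) μ := step1
    _ = ((∑' i, essSup (h i) μ) ^ r) ^ (1/r) := by
        rw [← ENNReal.rpow_mul, mul_one_div_cancel hr0.ne', ENNReal.rpow_one]
    _ ≤ (∑' i, essSup (h i) μ ^ r) ^ (1/r) := by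
        gcongr
        exact tsum_rpow_le' _ hr0 hr1

def NNLp {α : Type*} [MeasurableSpace α] (μ : Measure α) (p : ℝ≥0∞) (u : α → ℝ≥0∞) : ℝ≥0∞ :=
  if p = ∞ then essSup u μ else (∫⁻ x, u x ^ p.toReal ∂μ) ^ (1 / p.toReal)

variable {p : ℝ≥0∞}

lemma NNLp_mono_ae {u w : α → ℝ≥0∞} (h : u ≤ᵐ[μ] w) : NNLp μ p u ≤ NNLp μ p w := by
  unfold NNLp
  split
  · exact essSup_mono_ae h
  · refine ENNReal.rpow_le_rpow (lintegral_mono_ae ?_) (by positivity)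
    filter_upwards [h] with x hx
    exact ENNReal.rpow_le_rpow hx ENNReal.toReal_nonneg

lemma NNLp_congr_ae {u w : α → ℝ≥0∞} (h : u =ᵐ[μ] w) : NNLp μ p u = NNLp μ p w :=
  le_antisymm (NNLp_mono_ae h.le) (NNLp_mono_ae h.symm.le)

lemma eLpNorm_eq_NNLp (F : α → ℂ) (hp : p ≠ 0) :
    eLpNorm F p μ = NNLp μ p (fun x => (‖F x‖₊ : ℝ≥0∞)) := by
  by_cases h : p = ∞
  · subst h
    rw [eLpNorm_exponent_top, NNLp, if_pos rfl]
    rfl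
  · rw [eLpNorm_eq_lintegral_rpow_enorm_toReal hp h, NNLp, if_neg h]
    rfl

lemma NNLp_const_mul (hp : p ≠ 0) {u : α → ℝ≥0∞} (hu : Measurable u) (k : ℝ≥0∞) :
    NNLp μ p (fun x => k * u x) = k * NNLp μ p u := by
  unfold NNLp
  split
  · exact ENNReal.essSup_const_mul
  · rename_i h
    have hq : 0 < p.toReal := ENNReal.toReal_pos hp h
    have : ∫⁻ x, (k * u x) ^ p.toReal ∂μ = k ^ p.toReal * ∫⁻ x, u x ^ p.toReal ∂μ := by
      simp_rw [ENNReal.mul_rpow_of_nonneg _ _ hq.le]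
      exact lintegral_const_mul _ (hu.pow_const _)
    rw [this, ENNReal.mul_rpow_of_nonneg _ _ (by positivity : (0:ℝ) ≤ 1 / p.toReal),
      ← ENNReal.rpow_mul, mul_one_div_cancel hq.ne', ENNReal.rpow_one]

lemma NNLp_key {h : ι → α → ℝ≥0∞} (hm : ∀ i, Measurable (h i)) (hp : p ≠ 0) {r : ℝ}
    (hr0 : 0 < r) (hrp : ENNReal.ofReal r ≤ min 1 p) :
    NNLp μ p (fun x => ∑' i, h i x) ≤ (∑' i, NNLp μ p (h i) ^ r) ^ (1/r) := by
  have hr1 : r ≤ 1 := ENNReal.ofReal_le_one.1 (hrp.trans (min_le_left _ _))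
  unfold NNLp
  split
  · exact lp_key_top hr0 hr1
  · rename_i hptop
    have hq : 0 < p.toReal := ENNReal.toReal_pos hp hptop
    have hrq : r ≤ p.toReal :=
      (ENNReal.ofReal_le_iff_le_toReal hptop).1 (hrp.trans (min_le_right _ _))
    exact lp_key_finite hm hq hr0 hr1 hrq

lemma NNLp_lt_top_ae (hp : p ≠ 0) {u : α → ℝ≥0∞} (hu : Measurable u)
    (hfin : NNLp μ p u ≠ ∞) : ∀ᵐ x ∂μ, u x < ∞ := by
  unfold NNLp at hfin
  by_cases h : p = ∞
  · rw [if_pos h] at hfin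
    filter_upwards [ENNReal.ae_le_essSup (μ := μ) u] with x hx
    exact lt_of_le_of_lt hx (lt_top_iff_ne_top.2 hfin)
  · rw [if_neg h] at hfin
    have hq : 0 < p.toReal := ENNReal.toReal_pos hp h
    have hint : ∫⁻ x, u x ^ p.toReal ∂μ ≠ ∞ := by
      intro hc
      rw [hc, ENNReal.top_rpow_of_pos (by positivity)] at hfin
      exact hfin rfl
    filter_upwards [ae_lt_top (hu.pow_const _) hint] with x hx
    by_contra hcon
    rw [not_lt, top_le_iff] at hcon
    rw [hcon, ENNReal.top_rpow_of_pos hq] at hx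
    exact absurd hx (lt_irrefl _)


lemma NNLp_translate (d : ℕ) (p : ℝ≥0∞) (u : Ed d → ℝ≥0∞) (hu : Measurable u) (τ : Ed d) :
    NNLp volume p (fun x => u (x - τ)) = NNLp volume p u := by
  unfold NNLp
  split
  · have hmap : Measure.map (fun x : Ed d => x - τ) volume = volume :=
      (measurePreserving_sub_right volume τ).map_eq
    have he : essSup u (Measure.map (MeasurableEquiv.subRight τ) (volume : Measure (Ed d))) =
        essSup (u ∘ (MeasurableEquiv.subRight τ)) volume :=
      (MeasurableEquiv.subRight τ).measurableEmbedding.essSup_map_measure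
    have hco : (MeasurableEquiv.subRight τ : Ed d → Ed d) = fun x => x - τ := rfl
    rw [hco, hmap] at he
    exact (he.symm.trans rfl)
  · congr 1
    exact lintegral_sub_right_eq_self (fun x => u x ^ p.toReal) τ

end AuxLemmas

/-- quasi-Banach Young-type estimate for the semi-discrete convolution
`(a ∗ f)(x) = ∑_{j∈ℤ^d} a(j)·f(x−j)`:
`‖(a∗f)·ω‖_{L^p} ≤ C·(∑_j (|a(j)|·v(j))^r)^{1/r}·‖f·ω‖_{L^p}` for `r ∈ (0, min(1,p)]`. -/
theorem stmt9 (d : ℕ) (hd : 1 ≤ d) (ω v : Ed d → ℝ)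
    (hω : IsWeight d ω) (hv : IsWeight d v) (hsub : Submult d v) (hmod : Moderate d ω v)
    (p : ℝ≥0∞) (hp : 0 < p) (r : ℝ) (hr : 0 < r) (hrp : ENNReal.ofReal r ≤ min 1 p) :
    ∃ C : ℝ, 0 < C ∧
      ∀ (a : (Fin d → ℤ) → ℂ) (f : Ed d → ℂ),
        Summable (fun j : Fin d → ℤ => (‖a j‖ * v (intVec d j)) ^ r) →
        Measurable f →
        eLpNorm (fun x => f x * (ω x : ℂ)) p volume < ⊤ →
        (∀ᵐ x : Ed d, Summable fun j : Fin d → ℤ => ‖a j * f (x - intVec d j)‖) ∧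
        eLpNorm (fun x => (∑' j : Fin d → ℤ, a j * f (x - intVec d j)) * (ω x : ℂ)) p volume ≤
          ENNReal.ofReal (C * (∑' j : Fin d → ℤ, (‖a j‖ * v (intVec d j)) ^ r) ^ (1/r)) *
            eLpNorm (fun x => f x * (ω x : ℂ)) p volume := by
  obtain ⟨Cm, hCm, hCmle⟩ := hmod
  have hωpos := hω.2.1
  have hvpos := hv.2.1
  have hp0 : p ≠ 0 := hp.ne'
  refine ⟨Cm, hCm, ?_⟩
  intro a f ha hf hfp
  -- Notation
  set g : Ed d → ℝ≥0∞ := fun x => (‖f x‖₊ : ℝ≥0∞) * ENNReal.ofReal (ω x) with hgdef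
  have hg : Measurable g := (hf.nnnorm.coe_nnreal_ennreal).mul (hω.1.ennreal_ofReal)
  set c : (Fin d → ℤ) → ℝ≥0∞ := fun j => ENNReal.ofReal (‖a j‖ * v (intVec d j)) with hcdef
  set h : (Fin d → ℤ) → Ed d → ℝ≥0∞ := fun j x => c j * g (x - intVec d j) with hhdef
  have hsubmeas : ∀ j, Measurable fun x : Ed d => x - intVec d j :=
    fun j => (measurePreserving_sub_right volume (intVec d j)).measurable
  have hhm : ∀ j, Measurable (h j) := fun j => measurable_const.mul (hg.comp (hsubmeas j))
  have hgeq : ∀ x, g x = (‖f x * (ω x : ℂ)‖₊ : ℝ≥0∞) := by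
    intro x
    rw [hgdef]
    dsimp only
    rw [nnnorm_mul, ENNReal.coe_mul, Complex.nnnorm_real]
    congr 1
    rw [← enorm_eq_nnnorm, ← ofReal_norm, Real.norm_eq_abs, abs_of_pos (hωpos x)]
  set B := eLpNorm (fun x => f x * (ω x : ℂ)) p volume with hB
  have hBNN : NNLp volume p g = B := by
    rw [hB, eLpNorm_eq_NNLp _ hp0]
    exact NNLp_congr_ae (Filter.Eventually.of_forall hgeq)
  have hcj : ∀ j, c j = (‖a j‖₊ : ℝ≥0∞) * ENNReal.ofReal (v (intVec d j)) := by
    intro j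
    rw [hcdef]
    dsimp only
    rw [ENNReal.ofReal_mul (norm_nonneg _), ofReal_norm, enorm_eq_nnnorm]
  have hNh : ∀ j, NNLp volume p (h j) = c j * B := by
    intro j
    rw [hhdef]
    rw [NNLp_const_mul hp0 (u := fun x => g (x - intVec d j)) (hg.comp (hsubmeas j)) (c j),
      NNLp_translate d p g hg (intVec d j), hBNN]
  set A : ℝ := ∑' j : Fin d → ℤ, (‖a j‖ * v (intVec d j)) ^ r with hA
  have hA0 : 0 ≤ A :=
    tsum_nonneg fun j => Real.rpow_nonneg (mul_nonneg (norm_nonneg _) (hvpos _).le) r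
  have hsum : (∑' j, NNLp volume p (h j) ^ r) ^ (1/r) = ENNReal.ofReal (A ^ (1/r)) * B := by
    have h1 : ∀ j, NNLp volume p (h j) ^ r =
        ENNReal.ofReal ((‖a j‖ * v (intVec d j)) ^ r) * B ^ r := by
      intro j
      rw [hNh j, ENNReal.mul_rpow_of_nonneg _ _ hr.le]
      congr 1
      exact ENNReal.ofReal_rpow_of_nonneg (mul_nonneg (norm_nonneg _) (hvpos _).le) hr.le
    calc (∑' j, NNLp volume p (h j) ^ r) ^ (1/r)
        = (∑' j, ENNReal.ofReal ((‖a j‖ * v (intVec d j)) ^ r) * B ^ r) ^ (1/r) := by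
          rw [tsum_congr h1]
      _ = ((∑' j, ENNReal.ofReal ((‖a j‖ * v (intVec d j)) ^ r)) * B ^ r) ^ (1/r) := by
          rw [ENNReal.tsum_mul_right]
      _ = (ENNReal.ofReal A * B ^ r) ^ (1/r) := by
          rw [← ENNReal.ofReal_tsum_of_nonneg
            (fun j => Real.rpow_nonneg (mul_nonneg (norm_nonneg _) (hvpos _).le) r) ha]
      _ = ENNReal.ofReal (A ^ (1/r)) * B := by
          rw [ENNReal.mul_rpow_of_nonneg _ _ (by positivity : (0:ℝ) ≤ 1/r),
            ENNReal.ofReal_rpow_of_nonneg hA0 (by positivity : (0:ℝ) ≤ 1/r),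
            ← ENNReal.rpow_mul, mul_one_div_cancel hr.ne', ENNReal.rpow_one]
  set S : Ed d → ℝ≥0∞ := fun x =>
    (∑' j : Fin d → ℤ, (‖a j‖₊ : ℝ≥0∞) * (‖f (x - intVec d j)‖₊ : ℝ≥0∞)) *
      ENNReal.ofReal (ω x) with hSdef
  have hSmeas : Measurable S :=
    (Measurable.ennreal_tsum fun j =>
      measurable_const.mul ((hf.nnnorm.coe_nnreal_ennreal).comp (hsubmeas j))).mul
      hω.1.ennreal_ofReal
  have hSle : ∀ x, S x ≤ ENNReal.ofReal Cm * ∑' j, h j x := by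
    intro x
    rw [hSdef]
    dsimp only
    rw [← ENNReal.tsum_mul_right, ← ENNReal.tsum_mul_left]
    refine ENNReal.tsum_le_tsum fun j => ?_
    have hω' : ω x ≤ Cm * ω (x - intVec d j) * v (intVec d j) := by
      have h2 := hCmle (x - intVec d j) (intVec d j)
      rwa [sub_add_cancel] at h2
    calc (‖a j‖₊ : ℝ≥0∞) * (‖f (x - intVec d j)‖₊ : ℝ≥0∞) * ENNReal.ofReal (ω x)
        ≤ (‖a j‖₊ : ℝ≥0∞) * (‖f (x - intVec d j)‖₊ : ℝ≥0∞) *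
            ENNReal.ofReal (Cm * ω (x - intVec d j) * v (intVec d j)) := by
          gcongr
      _ = ENNReal.ofReal Cm * h j x := by
          rw [ENNReal.ofReal_mul (mul_nonneg hCm.le (hωpos _).le),
            ENNReal.ofReal_mul hCm.le, hhdef]
          dsimp only
          rw [hcj j, hgdef]
          ring
  have hS : NNLp volume p S ≤ ENNReal.ofReal Cm * (ENNReal.ofReal (A ^ (1/r)) * B) := by
    calc NNLp volume p S ≤ NNLp volume p (fun x => ENNReal.ofReal Cm * ∑' j, h j x) :=
          NNLp_mono_ae (Filter.Eventually.of_forall hSle)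
      _ = ENNReal.ofReal Cm * NNLp volume p (fun x => ∑' j, h j x) :=
          NNLp_const_mul hp0 (Measurable.ennreal_tsum hhm) _
      _ ≤ ENNReal.ofReal Cm * (∑' j, NNLp volume p (h j) ^ r) ^ (1/r) := by
          gcongr
          exact NNLp_key hhm hp0 hr hrp
      _ = _ := by rw [hsum]
  have hSfin : NNLp volume p S ≠ ∞ := by
    refine (lt_of_le_of_lt hS ?_).ne
    exact ENNReal.mul_lt_top ENNReal.ofReal_lt_top
      (ENNReal.mul_lt_top ENNReal.ofReal_lt_top hfp)
  have part1 : ∀ᵐ x : Ed d, Summable fun j : Fin d → ℤ => ‖a j * f (x - intVec d j)‖ := by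
    filter_upwards [NNLp_lt_top_ae hp0 hSmeas hSfin] with x hx
    have hω0 : ENNReal.ofReal (ω x) ≠ 0 := (ENNReal.ofReal_pos.2 (hωpos x)).ne'
    have hT : (∑' j : Fin d → ℤ, (‖a j‖₊ : ℝ≥0∞) * (‖f (x - intVec d j)‖₊ : ℝ≥0∞)) ≠ ∞ := by
      intro hc
      rw [hSdef] at hx
      dsimp only at hx
      rw [hc, ENNReal.top_mul hω0] at hx
      exact absurd hx (lt_irrefl _)
    have hT2 : (∑' j : Fin d → ℤ,
        ((‖a j‖₊ * ‖f (x - intVec d j)‖₊ : ℝ≥0) : ℝ≥0∞)) ≠ ∞ := by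
      simpa [ENNReal.coe_mul] using hT
    have hsummable : Summable fun j : Fin d → ℤ => ‖a j‖₊ * ‖f (x - intVec d j)‖₊ :=
      ENNReal.tsum_coe_ne_top_iff_summable.1 hT2
    have h3 := NNReal.summable_coe.2 hsummable
    refine h3.congr fun j => ?_
    push_cast
    rw [norm_mul]
  refine ⟨part1, ?_⟩
  have hae2 : ∀ᵐ x : Ed d,
      (‖(∑' j : Fin d → ℤ, a j * f (x - intVec d j)) * (ω x : ℂ)‖₊ : ℝ≥0∞) ≤ S x := by
    filter_upwards [part1] with x hx
    have hsn : Summable fun j : Fin d → ℤ => ‖a j * f (x - intVec d j)‖₊ := by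
      rw [← NNReal.summable_coe]
      exact hx.congr fun j => (coe_nnnorm _).symm
    have hnorm : (‖∑' j : Fin d → ℤ, a j * f (x - intVec d j)‖₊ : ℝ≥0∞) ≤
        ∑' j : Fin d → ℤ, (‖a j‖₊ : ℝ≥0∞) * (‖f (x - intVec d j)‖₊ : ℝ≥0∞) := by
      calc (‖∑' j : Fin d → ℤ, a j * f (x - intVec d j)‖₊ : ℝ≥0∞)
          ≤ ((∑' j : Fin d → ℤ, ‖a j * f (x - intVec d j)‖₊ : ℝ≥0) : ℝ≥0∞) :=
            ENNReal.coe_le_coe.2 (nnnorm_tsum_le hsn)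
        _ = ∑' j : Fin d → ℤ, (‖a j * f (x - intVec d j)‖₊ : ℝ≥0∞) := ENNReal.coe_tsum hsn
        _ = ∑' j : Fin d → ℤ, (‖a j‖₊ : ℝ≥0∞) * (‖f (x - intVec d j)‖₊ : ℝ≥0∞) :=
            tsum_congr fun j => by rw [nnnorm_mul, ENNReal.coe_mul]
    calc (‖(∑' j : Fin d → ℤ, a j * f (x - intVec d j)) * (ω x : ℂ)‖₊ : ℝ≥0∞)
        = (‖∑' j : Fin d → ℤ, a j * f (x - intVec d j)‖₊ : ℝ≥0∞) * ENNReal.ofReal (ω x) := by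
          rw [nnnorm_mul, ENNReal.coe_mul, Complex.nnnorm_real]
          congr 1
          rw [← enorm_eq_nnnorm, ← ofReal_norm, Real.norm_eq_abs, abs_of_pos (hωpos x)]
      _ ≤ S x := by
          rw [hSdef]
          dsimp only
          gcongr
  rw [eLpNorm_eq_NNLp _ hp0]
  have hfin : ENNReal.ofReal Cm * (ENNReal.ofReal (A ^ (1/r)) * B) =
      ENNReal.ofReal (Cm * A ^ (1/r)) * B := by
    rw [ENNReal.ofReal_mul hCm.le, mul_assoc]
  exact le_trans (NNLp_mono_ae hae2) (le_trans hS hfin.le)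
end
end

section
/- Let d ≥ 1, let ω, v be weights on ℝ^d with v submultiplicative and ω v-moderate, let p ∈ (0,∞] and r ∈ (0, min(1,p)]. Then there exists C > 0 such that for every a: ℤ^d → ℂ with ∑_{j∈ℤ^d} (|a(j)|·v(j))^r < ∞ and every measurable f: ℝ^d → ℂ such that |f| is ℤ^d-periodic and ‖f·ω‖_{L^p([0,1]^d)} < ∞, the semi-discrete convolution (a ∗ f)(x) = ∑_{j∈ℤ^d} a(j)·f(x−j) converges absolutely for almost every x ∈ [0,1]^d and ‖(a ∗ f)·ω‖_{L^p([0,1]^d)} ≤ C·(∑_{j∈ℤ^d} (|a(j)|·v(j))^r)^{1/r}·‖f·ω‖_{L^p([0,1]^d)}. -/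
open MeasureTheory Complex Real
open scoped InnerProductSpace ENNReal

noncomputable section

/-- The cube `[a,b]^d ⊆ ℝ^d`. -/
def cube (d : ℕ) (a b : ℝ) : Set (Ed d) := {x | ∀ i, x i ∈ Set.Icc a b}

lemma aux_tsum_rpow {ι : Type*} (b : ι → ℝ) (hb : ∀ j, 0 ≤ b j) {r : ℝ} (hr : 0 < r)
    (hr1 : r ≤ 1) (hs : Summable fun j => b j ^ r) :
    Summable b ∧ ∑' j, b j ≤ (∑' j, b j ^ r) ^ (1/r) := by
  set T : ℝ := ∑' j, b j ^ r with hT_def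
  have hTnn : 0 ≤ T := tsum_nonneg fun j => Real.rpow_nonneg (hb j) r
  have hkey : ∀ j, b j ≤ b j ^ r * T ^ ((1 - r) / r) := by
    intro j
    rcases eq_or_lt_of_le (hb j) with h0 | h0
    · rw [← h0, Real.zero_rpow hr.ne']; positivity
    · have hle : b j ^ r ≤ T := Summable.le_tsum hs j fun i _ => Real.rpow_nonneg (hb i) r
      have hbT : b j ≤ T ^ r⁻¹ := by
        have : (b j ^ r) ^ r⁻¹ ≤ T ^ r⁻¹ :=
          Real.rpow_le_rpow (by positivity) hle (by positivity)
        rwa [Real.rpow_rpow_inv (hb j) hr.ne'] at this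
      have h1 : b j ^ (1 - r) ≤ T ^ ((1 - r) / r) := by
        have := Real.rpow_le_rpow (hb j) hbT (by linarith : (0:ℝ) ≤ 1 - r)
        rwa [← Real.rpow_mul hTnn, show r⁻¹ * (1 - r) = (1 - r) / r by field_simp] at this
      calc b j = b j ^ r * b j ^ (1 - r) := by
            rw [← Real.rpow_add h0]; norm_num
        _ ≤ b j ^ r * T ^ ((1 - r) / r) :=
            mul_le_mul_of_nonneg_left h1 (by positivity)
  have hsb : Summable b :=
    Summable.of_nonneg_of_le hb hkey (hs.mul_right _)
  refine ⟨hsb, ?_⟩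
  rcases eq_or_lt_of_le hTnn with hT0 | hT0
  · have hall : ∀ j, b j = 0 := by
      intro j
      by_contra hbj
      have hbj' : 0 < b j := lt_of_le_of_ne (hb j) (Ne.symm hbj)
      have hle : b j ^ r ≤ T := Summable.le_tsum hs j fun i _ => Real.rpow_nonneg (hb i) r
      have : (0:ℝ) < b j ^ r := Real.rpow_pos_of_pos hbj' r
      linarith [hT0 ▸ hle]
    have : ∑' j, b j = 0 := by simp [hall]
    rw [this, ← hT0, Real.zero_rpow (by positivity : (1:ℝ)/r ≠ 0)]
  · calc ∑' j, b j ≤ ∑' j, b j ^ r * T ^ ((1 - r) / r) :=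
        Summable.tsum_le_tsum hkey hsb (hs.mul_right _)
      _ = T * T ^ ((1 - r) / r) := by rw [tsum_mul_right]
      _ = T ^ (1/r) := by
          nth_rewrite 1 [← Real.rpow_one T]
          rw [← Real.rpow_add hT0]
          congr 1
          field_simp
          ring


/-- the periodic version of the semi-discrete convolution estimate: if `|f|` is
`ℤ^d`-periodic then `‖(a∗f)·ω‖_{L^p([0,1]^d)} ≤ C·(∑_j (|a(j)|·v(j))^r)^{1/r}·‖f·ω‖_{L^p([0,1]^d)}`
for `r ∈ (0, min(1,p)]`. -/
theorem stmt10 (d : ℕ) (hd : 1 ≤ d) (ω v : Ed d → ℝ)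
    (hω : IsWeight d ω) (hv : IsWeight d v) (hsub : Submult d v) (hmod : Moderate d ω v)
    (p : ℝ≥0∞) (hp : 0 < p) (r : ℝ) (hr : 0 < r) (hrp : ENNReal.ofReal r ≤ min 1 p) :
    ∃ C : ℝ, 0 < C ∧
      ∀ (a : (Fin d → ℤ) → ℂ) (f : Ed d → ℂ),
        Summable (fun j : Fin d → ℤ => (‖a j‖ * v (intVec d j)) ^ r) →
        Measurable f →
        (∀ (x : Ed d) (k : Fin d → ℤ), ‖f (x + intVec d k)‖ = ‖f x‖) →
        eLpNorm (fun x => f x * (ω x : ℂ)) p (volume.restrict (cube d 0 1)) < ⊤ →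
        (∀ᵐ x ∂(volume.restrict (cube d 0 1)),
            Summable fun j : Fin d → ℤ => ‖a j * f (x - intVec d j)‖) ∧
        eLpNorm (fun x => (∑' j : Fin d → ℤ, a j * f (x - intVec d j)) * (ω x : ℂ)) p
            (volume.restrict (cube d 0 1)) ≤
          ENNReal.ofReal (C * (∑' j : Fin d → ℤ, (‖a j‖ * v (intVec d j)) ^ r) ^ (1/r)) *
            eLpNorm (fun x => f x * (ω x : ℂ)) p (volume.restrict (cube d 0 1)) := by
  obtain ⟨hωmeas, hωpos, -⟩ := hω
  obtain ⟨hvmeas, hvpos, -⟩ := hv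
  obtain ⟨hveven, Cs, hCs, hvC⟩ := hsub
  have hr1 : r ≤ 1 := by
    have := le_trans hrp (min_le_left _ _)
    rwa [ENNReal.ofReal_le_one] at this
  set c : ℝ := Real.sqrt (v 0 / Cs) with hc_def
  have hc : 0 < c := Real.sqrt_pos.mpr (div_pos (hvpos 0) hCs)
  have hcv : ∀ x, c ≤ v x := by
    intro x
    have h0 : v 0 ≤ Cs * v x * v (-x) := by simpa using hvC x (-x)
    rw [hveven] at h0
    have h2 : v 0 / Cs ≤ v x ^ 2 := by
      rw [div_le_iff₀ hCs]
      nlinarith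
    calc c = Real.sqrt (v 0 / Cs) := rfl
      _ ≤ Real.sqrt (v x ^ 2) := Real.sqrt_le_sqrt h2
      _ = v x := Real.sqrt_sq (hvpos x).le
  refine ⟨c⁻¹, inv_pos.mpr hc, ?_⟩
  intro a f hsum hfmeas hper hfin
  have hpernorm : ∀ (x : Ed d) (j : Fin d → ℤ), ‖f (x - intVec d j)‖ = ‖f x‖ := by
    intro x j
    have := hper (x - intVec d j) j
    rw [sub_add_cancel] at this
    exact this.symm
  set b : (Fin d → ℤ) → ℝ := fun j => ‖a j‖ * v (intVec d j) with hb_def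
  have hbnn : ∀ j, 0 ≤ b j := fun j => mul_nonneg (norm_nonneg _) (hvpos _).le
  obtain ⟨hbsum, hble⟩ := aux_tsum_rpow b hbnn hr hr1 hsum
  have haptle : ∀ j, ‖a j‖ ≤ c⁻¹ * b j := by
    intro j
    have h1 : ‖a j‖ * c ≤ ‖a j‖ * v (intVec d j) :=
      mul_le_mul_of_nonneg_left (hcv _) (norm_nonneg _)
    calc ‖a j‖ = c⁻¹ * (‖a j‖ * c) := by field_simp
      _ ≤ c⁻¹ * (‖a j‖ * v (intVec d j)) :=
        mul_le_mul_of_nonneg_left h1 (by positivity)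
  have hasum : Summable fun j => ‖a j‖ :=
    Summable.of_nonneg_of_le (fun j => norm_nonneg _) haptle (hbsum.mul_left c⁻¹)
  set K : ℝ := c⁻¹ * (∑' j, b j ^ r) ^ (1/r) with hK_def
  have hKnn : 0 ≤ K := by
    have : (0:ℝ) ≤ (∑' j, b j ^ r) ^ (1/r) :=
      Real.rpow_nonneg (tsum_nonneg fun j => Real.rpow_nonneg (hbnn j) r) _
    positivity
  have hAle : ∑' j, ‖a j‖ ≤ K := by
    calc ∑' j, ‖a j‖ ≤ ∑' j, c⁻¹ * b j :=
        Summable.tsum_le_tsum haptle hasum (hbsum.mul_left _)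
      _ = c⁻¹ * ∑' j, b j := tsum_mul_left
      _ ≤ K := mul_le_mul_of_nonneg_left hble (by positivity)
  have hxsum : ∀ x : Ed d, Summable fun j => ‖a j * f (x - intVec d j)‖ := by
    intro x
    have heq : (fun j => ‖a j * f (x - intVec d j)‖) = fun j => ‖a j‖ * ‖f x‖ := by
      funext j; rw [norm_mul, hpernorm]
    rw [heq]; exact hasum.mul_right _
  refine ⟨Filter.Eventually.of_forall hxsum, ?_⟩
  have hpt : ∀ x : Ed d,
      ‖(∑' j, a j * f (x - intVec d j)) * (ω x : ℂ)‖ ≤ ‖(K : ℂ) * (f x * (ω x : ℂ))‖ := by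
    intro x
    have hωn : ‖((ω x : ℝ) : ℂ)‖ = ω x := by
      rw [Complex.norm_real, Real.norm_eq_abs, abs_of_pos (hωpos x)]
    have hKn : ‖((K : ℝ) : ℂ)‖ = K := by
      rw [Complex.norm_real, Real.norm_eq_abs, _root_.abs_of_nonneg hKnn]
    rw [norm_mul, norm_mul, hωn, hKn]
    have h1 : ‖∑' j, a j * f (x - intVec d j)‖ ≤ (∑' j, ‖a j‖) * ‖f x‖ := by
      refine le_trans (norm_tsum_le_tsum_norm (hxsum x)) (le_of_eq ?_)
      rw [← tsum_mul_right]
      exact tsum_congr fun j => by rw [norm_mul, hpernorm]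
    calc ‖∑' j, a j * f (x - intVec d j)‖ * ω x
        ≤ ((∑' j, ‖a j‖) * ‖f x‖) * ω x :=
          mul_le_mul_of_nonneg_right h1 (hωpos x).le
      _ ≤ (K * ‖f x‖) * ω x := by
          have := mul_le_mul_of_nonneg_right hAle (norm_nonneg (f x))
          exact mul_le_mul_of_nonneg_right this (hωpos x).le
      _ = K * ‖f x * ((ω x : ℝ) : ℂ)‖ := by rw [norm_mul, hωn]; ring
  calc eLpNorm (fun x => (∑' j, a j * f (x - intVec d j)) * (ω x : ℂ)) p
        (volume.restrict (cube d 0 1))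
      ≤ eLpNorm (fun x => (K : ℂ) * (f x * (ω x : ℂ))) p (volume.restrict (cube d 0 1)) :=
        eLpNorm_mono_ae (Filter.Eventually.of_forall hpt)
    _ = (‖(K : ℂ)‖₊ : ℝ≥0∞) * eLpNorm (fun x => f x * (ω x : ℂ)) p
          (volume.restrict (cube d 0 1)) := by
        have hfe : (fun x => (K : ℂ) * (f x * (ω x : ℂ)))
            = (K : ℂ) • (fun x => f x * (ω x : ℂ)) := rfl
        rw [hfe, eLpNorm_const_smul]
        rfl
    _ ≤ ENNReal.ofReal (c⁻¹ * (∑' j, b j ^ r) ^ (1/r)) *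
          eLpNorm (fun x => f x * (ω x : ℂ)) p (volume.restrict (cube d 0 1)) := by
        gcongr
        rw [← enorm_eq_nnnorm, ← ofReal_norm, Complex.norm_real, Real.norm_eq_abs,
          _root_.abs_of_nonneg hKnn]


end
end
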